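/- Let n ≥ 1, let w₁,…,wₙ be nonnegative reals with w₁ + ⋯ + wₙ = 1, and let σ₁,…,σₙ be positive reals. Define the Gaussian scale-mixture density p(x) = Σᵢ wᵢ φ_{σᵢ}(x), where φ_σ(x) = (2πσ²)^{-1/2} exp(−x²/(2σ²)). Then the Fisher information of p satisfies the upper bound ∫_ℝ (p'(x))² / p(x) dx ≤ Σᵢ wᵢ / σᵢ². -/

import Mathlib

open MeasureTheory Real

/-- The centered Gaussian density with scale `σ`: `φ_σ(x) = (2πσ²)^{-1/2} exp(−x²/(2σ²))`. -/
noncomputable def gaussianDensity (σ : ℝ) (x : ℝ) : ℝ :=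
  (2 * π * σ ^ 2) ^ (-(1 : ℝ) / 2) * Real.exp (-x ^ 2 / (2 * σ ^ 2))


lemma gd_pos {σ : ℝ} (hσ : 0 < σ) (x : ℝ) : 0 < gaussianDensity σ x := by
  unfold gaussianDensity
  have h : (0:ℝ) < 2 * π * σ ^ 2 := by positivity
  positivity

lemma gd_hasDerivAt {σ : ℝ} (hσ : 0 < σ) (x : ℝ) :
    HasDerivAt (gaussianDensity σ) (-(x / σ ^ 2) * gaussianDensity σ x) x := by
  have h1 : HasDerivAt (fun y : ℝ => -y ^ 2 / (2 * σ ^ 2)) (-(2 * x) / (2 * σ ^ 2)) x := by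
    simpa using ((hasDerivAt_pow 2 x).neg.div_const (2 * σ ^ 2))
  have h2 := (h1.exp).const_mul ((2 * π * σ ^ 2) ^ (-(1 : ℝ) / 2))
  refine h2.congr_deriv ?_
  unfold gaussianDensity
  have : σ ^ 2 ≠ 0 := by positivity
  field_simp

lemma Gamma_three_halves : Real.Gamma (3/2) = Real.sqrt π / 2 := by
  rw [show (3/2:ℝ) = 1/2 + 1 by norm_num, Real.Gamma_add_one (by norm_num),
    Real.Gamma_one_half_eq]
  ring

lemma integral_sq_exp {b : ℝ} (hb : 0 < b) :
    ∫ x : ℝ, x ^ 2 * Real.exp (-b * x ^ 2) = b ^ (-(3:ℝ)/2) * (Real.sqrt π / 2) := by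
  have h := integral_rpow_mul_exp_neg_mul_rpow (p := 2) (q := 2) (by norm_num) (by norm_num) hb
  have hc : ∀ x : ℝ, x ^ (2:ℝ) = x ^ 2 := fun x => by
    rw [show (2:ℝ) = ((2:ℕ):ℝ) by norm_num, Real.rpow_natCast]
  simp_rw [hc] at h
  calc ∫ x : ℝ, x ^ 2 * Real.exp (-b * x ^ 2)
      = ∫ x : ℝ, (fun t => t ^ 2 * Real.exp (-b * t ^ 2)) |x| := by
        congr 1; ext x; simp [sq_abs]
    _ = 2 * ∫ t in Set.Ioi (0:ℝ), t ^ 2 * Real.exp (-b * t ^ 2) := by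
        exact integral_comp_abs (f := fun t => t ^ 2 * Real.exp (-b * t ^ 2))
    _ = b ^ (-(3:ℝ)/2) * (Real.sqrt π / 2) := by
        rw [h, show ((2:ℝ)+1)/2 = 3/2 by norm_num, Gamma_three_halves,
          show (-((2:ℝ)+1)/2) = -(3:ℝ)/2 by norm_num]
        ring

lemma gd_eq {σ : ℝ} (hσ : 0 < σ) (x : ℝ) :
    gaussianDensity σ x = (2 * π * σ ^ 2) ^ (-(1:ℝ)/2) * Real.exp (-(2*σ^2)⁻¹ * x ^ 2) := by
  unfold gaussianDensity
  congr 1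
  rw [neg_div, neg_mul, inv_mul_eq_div]

lemma integrable_gd {σ : ℝ} (hσ : 0 < σ) : Integrable (gaussianDensity σ) := by
  have hb : (0:ℝ) < (2*σ^2)⁻¹ := by positivity
  have := (integrable_exp_neg_mul_sq hb).const_mul ((2 * π * σ ^ 2) ^ (-(1:ℝ)/2))
  exact this.congr (by filter_upwards with x using (gd_eq hσ x).symm)

lemma integrable_sq_gd {σ : ℝ} (hσ : 0 < σ) :
    Integrable (fun x => x ^ 2 * gaussianDensity σ x) := by
  have hb : (0:ℝ) < (2*σ^2)⁻¹ := by positivity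
  have hc : ∀ x : ℝ, x ^ (2:ℝ) = x ^ 2 := fun x => by
    rw [show (2:ℝ) = ((2:ℕ):ℝ) by norm_num, Real.rpow_natCast]
  have h := (integrable_rpow_mul_exp_neg_mul_sq hb (s := 2) (by norm_num)).const_mul
    ((2 * π * σ ^ 2) ^ (-(1:ℝ)/2))
  refine h.congr (by filter_upwards with x; rw [gd_eq hσ x, hc]; ring)

lemma integral_sq_gd {σ : ℝ} (hσ : 0 < σ) :
    ∫ x : ℝ, x ^ 2 * gaussianDensity σ x = σ ^ 2 := by
  have hb : (0:ℝ) < (2*σ^2)⁻¹ := by positivity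
  have h2σ : (0:ℝ) < 2 * σ ^ 2 := by positivity
  calc ∫ x : ℝ, x ^ 2 * gaussianDensity σ x
      = (2 * π * σ ^ 2) ^ (-(1:ℝ)/2) * ∫ x : ℝ, x ^ 2 * Real.exp (-(2*σ^2)⁻¹ * x ^ 2) := by
        rw [← integral_const_mul]
        congr 1; ext x; rw [gd_eq hσ x]; ring
    _ = (2 * π * σ ^ 2) ^ (-(1:ℝ)/2) * (((2*σ^2)⁻¹) ^ (-(3:ℝ)/2) * (Real.sqrt π / 2)) := by
        rw [integral_sq_exp hb]
    _ = σ ^ 2 := by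
        rw [show ((2*σ^2)⁻¹ : ℝ) ^ (-(3:ℝ)/2) = (2*σ^2) ^ ((3:ℝ)/2) by
              rw [show (-(3:ℝ)/2) = -((3:ℝ)/2) by norm_num, Real.rpow_neg (by positivity),
                Real.inv_rpow h2σ.le, inv_inv],
          show 2 * π * σ ^ 2 = π * (2 * σ ^ 2) by ring,
          Real.mul_rpow pi_pos.le h2σ.le, Real.sqrt_eq_rpow]
        have e1 : (2*σ^2) ^ (-(1:ℝ)/2) * (2*σ^2) ^ ((3:ℝ)/2) = 2 * σ ^ 2 := by
          rw [← Real.rpow_add h2σ, show (-(1:ℝ)/2 + 3/2) = 1 by norm_num, Real.rpow_one]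
        have e2 : π ^ (-(1:ℝ)/2) * π ^ ((1:ℝ)/2) = 1 := by
          rw [← Real.rpow_add pi_pos, show (-(1:ℝ)/2 + 1/2) = 0 by norm_num, Real.rpow_zero]
        calc π ^ (-(1:ℝ)/2) * (2*σ^2) ^ (-(1:ℝ)/2) * ((2*σ^2) ^ ((3:ℝ)/2) * (π ^ ((1:ℝ)/2) / 2))
            = (π ^ (-(1:ℝ)/2) * π ^ ((1:ℝ)/2)) * ((2*σ^2) ^ (-(1:ℝ)/2) * (2*σ^2) ^ ((3:ℝ)/2)) / 2 := by ring
          _ = σ ^ 2 := by rw [e1, e2]; ring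

/-- Upper bound on the Fisher information of a Gaussian scale mixture:
`I(p) ≤ Σᵢ wᵢ / σᵢ²`. -/
theorem fisher_info_mixture_le (n : ℕ) (hn : 1 ≤ n) (w σ : Fin n → ℝ)
    (hw : ∀ i, 0 ≤ w i) (hws : ∑ i, w i = 1) (hσ : ∀ i, 0 < σ i) :
    ∫ x : ℝ, (deriv (fun y => ∑ i, w i * gaussianDensity (σ i) y) x) ^ 2 /
        (∑ i, w i * gaussianDensity (σ i) x) ≤ ∑ i, w i / (σ i) ^ 2 := by
  set p : ℝ → ℝ := fun y => ∑ i, w i * gaussianDensity (σ i) y with hp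
  set q : ℝ → ℝ := fun x => ∑ i, w i * (x / σ i ^ 2) ^ 2 * gaussianDensity (σ i) x with hq
  -- positivity of p
  obtain ⟨j, hj⟩ : ∃ j, 0 < w j := by
    by_contra h
    push_neg at h
    have : ∑ i, w i = 0 := Finset.sum_eq_zero fun i _ => le_antisymm (h i) (hw i)
    rw [hws] at this; norm_num at this
  have hppos : ∀ x, 0 < p x := fun x =>
    Finset.sum_pos' (fun i _ => mul_nonneg (hw i) (gd_pos (hσ i) x).le)
      ⟨j, Finset.mem_univ j, mul_pos hj (gd_pos (hσ j) x)⟩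
  -- derivative of p
  have hderiv : ∀ x, deriv p x = ∑ i, w i * (-(x / σ i ^ 2) * gaussianDensity (σ i) x) := by
    intro x
    exact (HasDerivAt.fun_sum fun i _ => ((gd_hasDerivAt (hσ i) x).const_mul (w i))).deriv
  -- pointwise Cauchy-Schwarz bound
  have key : ∀ x, (deriv p x) ^ 2 / p x ≤ q x := by
    intro x
    set s : Finset (Fin n) := Finset.univ.filter (fun i => 0 < w i) with hs
    have hzero : ∀ i, i ∉ s → w i = 0 := fun i hi => by
      simp only [hs, Finset.mem_filter, Finset.mem_univ, true_and] at hi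
      exact le_antisymm (not_lt.mp hi) (hw i)
    have hps : p x = ∑ i ∈ s, w i * gaussianDensity (σ i) x := by
      refine (Finset.sum_subset (Finset.subset_univ s) fun i _ hi => ?_).symm
      rw [hzero i hi, zero_mul]
    have hds : deriv p x = ∑ i ∈ s, w i * (-(x / σ i ^ 2) * gaussianDensity (σ i) x) := by
      rw [hderiv x]
      refine (Finset.sum_subset (Finset.subset_univ s) fun i _ hi => ?_).symm
      rw [hzero i hi, zero_mul]
    have hqs : ∑ i ∈ s, w i * (x / σ i ^ 2) ^ 2 * gaussianDensity (σ i) x = q x := by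
      refine Finset.sum_subset (Finset.subset_univ s) fun i _ hi => ?_
      rw [hzero i hi, zero_mul, zero_mul]
    have hcs := Finset.sq_sum_div_le_sum_sq_div s
      (fun i => w i * (-(x / σ i ^ 2) * gaussianDensity (σ i) x))
      (g := fun i => w i * gaussianDensity (σ i) x)
      (fun i hi => mul_pos (Finset.mem_filter.mp hi).2 (gd_pos (hσ i) x))
    rw [hds, hps, ← hqs]
    refine hcs.trans_eq (Finset.sum_congr rfl fun i hi => ?_)
    have hwi : (0:ℝ) < w i := (Finset.mem_filter.mp hi).2
    have hgi := gd_pos (hσ i) x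
    rw [div_eq_iff (mul_pos hwi hgi).ne']
    ring
  -- integrability of q terms and their integrals
  have hterm : ∀ i : Fin n, Integrable
      (fun x => w i * (x / σ i ^ 2) ^ 2 * gaussianDensity (σ i) x) := by
    intro i
    refine ((integrable_sq_gd (hσ i)).const_mul (w i / σ i ^ 4)).congr ?_
    filter_upwards with x
    have : (σ i : ℝ) ≠ 0 := (hσ i).ne'
    field_simp
  have hqint : Integrable q := integrable_finset_sum _ fun i _ => hterm i
  calc ∫ x : ℝ, (deriv p x) ^ 2 / p x ≤ ∫ x, q x := by
        refine integral_mono_of_nonneg ?_ hqint ?_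
        · filter_upwards with x using div_nonneg (sq_nonneg _) (hppos x).le
        · filter_upwards with x using key x
    _ = ∑ i, w i / σ i ^ 2 := by
        rw [hq, integral_finset_sum _ fun i _ => hterm i]
        refine Finset.sum_congr rfl fun i _ => ?_
        have hne : (σ i : ℝ) ≠ 0 := (hσ i).ne'
        have : (fun x : ℝ => w i * (x / σ i ^ 2) ^ 2 * gaussianDensity (σ i) x)
            = fun x => (w i / σ i ^ 4) * (x ^ 2 * gaussianDensity (σ i) x) := by
          funext x; field_simp
        rw [this, integral_const_mul, integral_sq_gd (hσ i)]
        field_simp
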